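/- arXiv:math/0001166 — 7 statements merged into one kernel-verified Lean document; each statement's English description precedes it below -/
import Mathlib

section
/- There exists a unique element E ∈ g such that ⁅E, X⁆ = i • X for every i ∈ ℤ and every X ∈ g_i; moreover, this element E lies in g_0. (This is the grading element of the |k|-graded semisimple Lie algebra g.) -/
open scoped DirectSum


/-! CONTEXT: `𝕂` a field of characteristic zero, `L` a finite-dimensional Lie algebra over `𝕂`
with nondegenerate Killing form (i.e. semisimple), equipped with a `|k|`-grading `g`. -/
/-- There exists a unique element `E` such that `⁅E, X⁆ = i • X` for every `i` and every
`X ∈ g i`; moreover this grading element lies in `g 0`. -/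
theorem grading_element_exists_unique
    {𝕂 : Type*} [Field 𝕂] [CharZero 𝕂]
    {L : Type*} [LieRing L] [LieAlgebra 𝕂 L] [Module.Finite 𝕂 L]
    (hκ : (killingForm 𝕂 L).Nondegenerate)
    (k : ℕ) (hk : 1 ≤ k)
    (g : ℤ → Submodule 𝕂 L)
    (hbd : ∀ i : ℤ, (k : ℤ) < |i| → g i = ⊥)
    (hint : DirectSum.IsInternal g)
    (hbr : ∀ i j : ℤ, ∀ x ∈ g i, ∀ y ∈ g j, ⁅x, y⁆ ∈ g (i + j)) :
    ∃ E : L, E ∈ g 0 ∧ (∀ (i : ℤ) (X : L), X ∈ g i → ⁅E, X⁆ = i • X) ∧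
      ∀ E' : L, (∀ (i : ℤ) (X : L), X ∈ g i → ⁅E', X⁆ = i • X) → E' = E := by
  classical
  haveI : LieAlgebra.IsKilling 𝕂 L := by
    constructor
    ext x
    simp only [LieIdeal.mem_killingCompl, LieSubmodule.mem_bot, LieSubmodule.mem_top,
      forall_true_left]
    constructor
    · intro h
      exact hκ.1 x fun y => by rw [LieModule.traceForm_comm]; exact h y
    · rintro rfl y
      simp
  set e : (⨁ i, g i) ≃ₗ[𝕂] L := LinearEquiv.ofBijective (DirectSum.coeLinearMap g) hint with he
  set S : (⨁ i, g i) →ₗ[𝕂] (⨁ i, g i) :=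
    DFinsupp.mapRange.linearMap (fun i => (i : 𝕂) • (LinearMap.id : g i →ₗ[𝕂] g i)) with hS
  set D : L →ₗ[𝕂] L := e.toLinearMap ∘ₗ S ∘ₗ e.symm.toLinearMap with hDdef
  have hScomp : ∀ (c : ⨁ i, g i) (j : ℤ), S c j = (j : 𝕂) • c j := by
    intro c j
    exact DFinsupp.mapRange_apply _ (fun i => map_zero _) c j
  have hD : ∀ (i : ℤ) (x : L), x ∈ g i → D x = (i : ℤ) • x := by
    intro i x hx
    have h1 : e (DirectSum.lof 𝕂 ℤ (fun j => (g j : Submodule 𝕂 L)) i ⟨x, hx⟩) = x := by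
      simp [he, DirectSum.lof_eq_of, DirectSum.coeLinearMap_of]
      exact DirectSum.coeLinearMap_of _ _ _
    have h2 : e.symm x = DirectSum.lof 𝕂 ℤ (fun j => (g j : Submodule 𝕂 L)) i ⟨x, hx⟩ := by
      rw [LinearEquiv.symm_apply_eq, h1]
    have h3 : S (DirectSum.lof 𝕂 ℤ (fun j => (g j : Submodule 𝕂 L)) i ⟨x, hx⟩)
        = (i : 𝕂) • DirectSum.lof 𝕂 ℤ (fun j => (g j : Submodule 𝕂 L)) i ⟨x, hx⟩ := by
      rw [← map_smul]
      refine DFinsupp.ext fun j => ?_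
      rw [hScomp]
      by_cases hij : i = j
      · subst hij
        simp [DirectSum.lof_eq_of, DirectSum.of_eq_same]
      · simp [DirectSum.lof_eq_of, DirectSum.of_eq_of_ne _ _ _ (Ne.symm hij)]
    have : D x = e ((i : 𝕂) • DirectSum.lof 𝕂 ℤ (fun j => (g j : Submodule 𝕂 L)) i ⟨x, hx⟩) := by
      simp only [hDdef, LinearMap.comp_apply, LinearEquiv.coe_coe, h2, h3]
    rw [this, map_smul, h1, Int.cast_smul_eq_zsmul]
  have hsup : (⨆ i, g i : Submodule 𝕂 L) = ⊤ := hint.submodule_iSup_eq_top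
  have hmemsup : ∀ x : L, x ∈ (⨆ i, g i : Submodule 𝕂 L) := fun x => hsup ▸ Submodule.mem_top
  -- Leibniz rule for D
  have hLeib : ∀ a b : L, D ⁅a, b⁆ = ⁅a, D b⁆ - ⁅b, D a⁆ := by
    have step : ∀ (i : ℤ) (x : L), x ∈ g i → ∀ b, D ⁅x, b⁆ = ⁅x, D b⁆ - ⁅b, D x⁆ := by
      intro i x hx b
      refine Submodule.iSup_induction (motive := fun b => D ⁅x, b⁆ = ⁅x, D b⁆ - ⁅b, D x⁆) g
        (hmemsup b) ?_ ?_ ?_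
      · intro j y hy
        have h1 : D ⁅x, y⁆ = (i + j) • ⁅x, y⁆ := hD (i + j) _ (hbr i j x hx y hy)
        rw [h1, hD i x hx, hD j y hy, add_smul, lie_smul, lie_smul, ← lie_skew y x,
          smul_neg, sub_neg_eq_add, add_comm]
      · simp
      · intro y z ihy ihz
        rw [lie_add, map_add, ihy, ihz, map_add, lie_add, add_lie]
        abel
    intro a
    refine Submodule.iSup_induction
      (motive := fun a => ∀ b, D ⁅a, b⁆ = ⁅a, D b⁆ - ⁅b, D a⁆) g (hmemsup a)
      (fun i x hx => step i x hx) ?_ ?_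
    · intro b; simp
    · intro x y ihx ihy b
      rw [add_lie, map_add, ihx b, ihy b, add_lie, map_add, lie_add]
      abel
  set Dder : LieDerivation 𝕂 L L := ⟨D, hLeib⟩ with hDder
  obtain ⟨E, hE⟩ := LieDerivation.IsKilling.exists_eq_ad Dder
  have hEad : ∀ x : L, ⁅E, x⁆ = D x := by
    intro x
    have h := DFunLike.congr_fun hE x
    have h2 : Dder x = D x := rfl
    rw [h2] at h
    rw [← h]
    simp [LieDerivation.ad_apply_apply, ← lie_skew x E]
  have hbracket : ∀ (i : ℤ) (X : L), X ∈ g i → ⁅E, X⁆ = i • X := by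
    intro i X hX
    rw [hEad, hD i X hX]
  refine ⟨E, ?_, hbracket, ?_⟩
  · -- E ∈ g 0 since D E = ⁅E, E⁆ = 0
    have hDE : D E = 0 := by rw [← hEad, lie_self]
    have hSc : S (e.symm E) = 0 := by
      apply e.injective
      have : e (S (e.symm E)) = D E := by simp [hDdef]
      rw [this, hDE, e.map_zero]
    have hcomp : ∀ j : ℤ, j ≠ 0 → (e.symm E) j = 0 := by
      intro j hj
      have := congrArg (fun c : ⨁ i, g i => c j) hSc
      simp only [DirectSum.zero_apply] at this
      rw [hScomp] at this
      have hj' : (j : 𝕂) ≠ 0 := Int.cast_ne_zero.mpr hj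
      exact (smul_eq_zero.mp this).resolve_left hj'
    have hEeq : e.symm E = DirectSum.lof 𝕂 ℤ (fun j => (g j : Submodule 𝕂 L)) 0 ((e.symm E) 0) := by
      refine DFinsupp.ext fun j => ?_
      by_cases hj : j = 0
      · subst hj; simp [DirectSum.lof_eq_of, DirectSum.of_eq_same]
      · rw [hcomp j hj]
        simp [DirectSum.lof_eq_of, DirectSum.of_eq_of_ne _ _ _ hj]
    have : E = ((e.symm E) 0 : L) := by
      conv_lhs => rw [← e.apply_symm_apply E]
      rw [hEeq]
      simp [he, DirectSum.lof_eq_of, DirectSum.coeLinearMap_of]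
      exact DirectSum.coeLinearMap_of _ _ _
    rw [this]
    exact ((e.symm E) 0).2
  · -- uniqueness
    intro E' hE'
    have hzero : ∀ y : L, ⁅E' - E, y⁆ = 0 := by
      intro y
      refine Submodule.iSup_induction (motive := fun y => ⁅E' - E, y⁆ = 0) g (hmemsup y) ?_ ?_ ?_
      · intro i x hx; rw [sub_lie, hE' i x hx, hbracket i x hx, sub_self]
      · simp
      · intro x y ihx ihy; rw [lie_add, ihx, ihy, add_zero]
    have had : LieAlgebra.ad 𝕂 L (E' - E) = 0 := by
      ext z; exact hzero z
    have : E' - E = 0 := by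
      apply hκ.1
      intro y
      rw [killingForm_apply_apply, had, LinearMap.zero_comp, map_zero]
    exact sub_eq_zero.mp this
end

section
/- The Lie subalgebra g_0 decomposes as the internal direct sum of its center z(g_0) = {A ∈ g_0 : ⁅A, B⁆ = 0 for all B ∈ g_0} and its derived subalgebra ⁅g_0, g_0⁆ (i.e. z(g_0) ∩ ⁅g_0, g_0⁆ = 0 and z(g_0) + ⁅g_0, g_0⁆ = g_0), and these two subspaces are orthogonal with respect to the Killing form of g: κ(Z, C) = 0 for all Z ∈ z(g_0) and C ∈ ⁅g_0, g_0⁆. -/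
open LinearMap Polynomial Module in
/-- Over an algebraically closed field of characteristic zero, an endomorphism all of whose
positive power traces vanish is nilpotent. -/
private lemma aux_isNilpotent_of_trace_pow {K V : Type*} [Field K] [CharZero K] [IsAlgClosed K]
    [AddCommGroup V] [Module K V] [FiniteDimensional K V] (f : Module.End K V)
    (h : ∀ n : ℕ, LinearMap.trace K V (f ^ (n + 1)) = 0) : IsNilpotent f := by
  classical
  have hfin : {μ : K | f.maxGenEigenspace μ ≠ ⊥}.Finite :=
    WellFoundedGT.finite_ne_bot_of_iSupIndep f.independent_maxGenEigenspace
  have hds : DirectSum.IsInternal f.maxGenEigenspace :=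
    DirectSum.isInternal_submodule_of_iSupIndep_of_iSup_eq_top
      f.independent_maxGenEigenspace (Module.End.iSup_maxGenEigenspace_eq_top f)
  set s := hfin.toFinset with hs
  have hmt : ∀ (n : ℕ) (μ : K),
      Set.MapsTo (f ^ n) (f.maxGenEigenspace μ) (f.maxGenEigenspace μ) := fun n μ =>
    Module.End.mapsTo_maxGenEigenspace_of_comm ((Commute.refl f).pow_right n) μ
  have hmt1 : ∀ μ : K, Set.MapsTo f (f.maxGenEigenspace μ) (f.maxGenEigenspace μ) := fun μ =>
    Module.End.mapsTo_maxGenEigenspace_of_comm (Commute.refl f) μ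
  -- trace of the restriction of `f ^ n` to a generalized eigenspace
  have key : ∀ (n : ℕ) (μ : K), LinearMap.trace K _ ((f ^ n).restrict (hmt n μ)) =
      μ ^ n * (finrank K (f.maxGenEigenspace μ) : K) := by
    intro n μ
    set fr : Module.End K (f.maxGenEigenspace μ) := f.restrict (hmt1 μ) with hfr
    have hres : (f ^ n).restrict (hmt n μ) = fr ^ n := by
      rw [hfr, Module.End.pow_restrict n (hmt1 μ)]
    rw [hres]
    have hnil : IsNilpotent (fr - algebraMap K _ μ) := by
      have h1 := Module.End.isNilpotent_restrict_maxGenEigenspace_sub_algebraMap f μ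
      have h2 : (f - algebraMap K (Module.End K V) μ).restrict
          (Module.End.mapsTo_maxGenEigenspace_of_comm
            (Algebra.mul_sub_algebraMap_commutes f μ) μ) = fr - algebraMap K _ μ := by
        ext x
        simp [LinearMap.restrict_apply, Module.algebraMap_end_apply, hfr]
        rfl
      rwa [h2] at h1
    clear hres
    induction n with
    | zero =>
      have : (fr ^ 0) = LinearMap.id (R := K) (M := f.maxGenEigenspace μ) := by
        rw [pow_zero]; rfl
      rw [this, LinearMap.trace_id, pow_zero, one_mul]
    | succ n ih =>
      have hcomp : fr ^ (n + 1) = (fr ^ n) ∘ₗ fr := by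
        rw [pow_succ, Module.End.mul_eq_comp]
      rw [hcomp, LinearMap.trace_comp_eq_mul_of_commute_of_isNilpotent μ
        ((Commute.refl fr).pow_left n) hnil, ih]
      ring
  -- the power sums of the eigenvalues (weighted by multiplicities) vanish
  have hsum : ∀ n : ℕ,
      ∑ μ ∈ s, μ ^ (n + 1) * (finrank K (f.maxGenEigenspace μ) : K) = 0 := by
    intro n
    have ht := LinearMap.trace_eq_sum_trace_restrict' hds hfin (fun μ => hmt (n + 1) μ)
    rw [h n] at ht
    rw [← Finset.sum_congr rfl (fun μ _ => key (n + 1) μ)]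
    exact ht.symm
  -- hence every eigenvalue is zero
  have hzero : ∀ μ ∈ s, μ = 0 := by
    intro μ0 hμ0
    by_contra hne
    have hc : True := trivial
    let c : K → K := fun μ => (finrank K (f.maxGenEigenspace μ) : K)
    set p : Polynomial K := X * ∏ ν ∈ s.erase μ0, (X - C ν) with hp
    have hp0 : p.coeff 0 = 0 := by
      rw [coeff_zero_eq_eval_zero, hp]
      simp
    have h1 : ∑ μ ∈ s, c μ * p.eval μ = c μ0 * p.eval μ0 := by
      refine Finset.sum_eq_single μ0 (fun ν hν hνne => ?_) (fun hmm => absurd hμ0 hmm)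
      have hev : p.eval ν = 0 := by
        rw [hp]
        simp only [eval_mul, eval_prod]
        refine mul_eq_zero_of_right _
          (Finset.prod_eq_zero (Finset.mem_erase.mpr ⟨hνne, hν⟩) ?_)
        simp
      rw [hev, mul_zero]
    have h2 : ∑ μ ∈ s, c μ * p.eval μ = 0 := by
      have hterm : ∀ μ ∈ s, c μ * p.eval μ =
          ∑ i ∈ Finset.range (p.natDegree + 1), p.coeff i * μ ^ i * c μ := by
        intro μ _
        rw [eval_eq_sum_range, Finset.mul_sum]
        exact Finset.sum_congr rfl fun i _ => by ring
      rw [Finset.sum_congr rfl hterm, Finset.sum_comm]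
      refine Finset.sum_eq_zero fun i _ => ?_
      cases i with
      | zero => simp [hp0]
      | succ n =>
        have hps := hsum n
        calc ∑ μ ∈ s, p.coeff (n + 1) * μ ^ (n + 1) * c μ
            = p.coeff (n + 1) * ∑ μ ∈ s, μ ^ (n + 1) * c μ := by
              rw [Finset.mul_sum]
              exact Finset.sum_congr rfl fun μ _ => by ring
          _ = 0 := by show p.coeff (n+1) * ∑ μ ∈ s, μ ^ (n + 1) * ((finrank K (f.maxGenEigenspace μ) : K)) = 0
                      rw [hps, mul_zero]
    have hev0 : p.eval μ0 ≠ 0 := by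
      rw [hp]
      simp only [eval_mul, eval_prod, eval_X, eval_sub, eval_C]
      refine mul_ne_zero hne (Finset.prod_ne_zero_iff.mpr fun ν hν => ?_)
      have : ν ≠ μ0 := (Finset.mem_erase.mp hν).1
      exact sub_ne_zero.mpr (Ne.symm this)
    have hc0 : ((finrank K (f.maxGenEigenspace μ0) : K)) = 0 := by
      have := h1.symm.trans h2
      exact (mul_eq_zero.mp this).resolve_right hev0
    have hbot : f.maxGenEigenspace μ0 ≠ ⊥ := (Set.Finite.mem_toFinset hfin).mp hμ0
    have : finrank K (f.maxGenEigenspace μ0) = 0 := by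
      exact_mod_cast hc0
    exact hbot (Submodule.finrank_eq_zero.mp this)
  -- conclude that `f` is nilpotent
  have htop : f.maxGenEigenspace 0 = ⊤ := by
    rw [eq_top_iff, ← Module.End.iSup_maxGenEigenspace_eq_top f]
    refine iSup_le fun μ => ?_
    by_cases hb : f.maxGenEigenspace μ = ⊥
    · rw [hb]; exact bot_le
    · have : μ = 0 := hzero μ ((Set.Finite.mem_toFinset hfin).mpr hb)
      rw [this]
  refine ((LinearMap.charpoly_nilpotent_tfae f).out 0 2).mpr fun m => ?_
  have hmem : m ∈ f.maxGenEigenspace 0 := htop.symm ▸ Submodule.mem_top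
  obtain ⟨k, hk⟩ := (Module.End.mem_maxGenEigenspace f 0 m).mp hmem
  exact ⟨k, by simpa using hk⟩


/-! CONTEXT: `𝕂` a field of characteristic zero, `L` a finite-dimensional Lie algebra over `𝕂`
with nondegenerate Killing form (i.e. semisimple), equipped with a `|k|`-grading `g`. -/
set_option synthInstance.maxHeartbeats 1000000 in
set_option maxHeartbeats 2000000 in
/-- `g 0` is the direct sum of its center and its derived subalgebra, and these two subspaces
are orthogonal with respect to the Killing form of `g`. -/
theorem g0_center_oplus_derived
    {𝕂 : Type*} [Field 𝕂] [CharZero 𝕂]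
    {L : Type*} [LieRing L] [LieAlgebra 𝕂 L] [Module.Finite 𝕂 L]
    (hκ : (killingForm 𝕂 L).Nondegenerate)
    (k : ℕ) (hk : 1 ≤ k)
    (g : ℤ → Submodule 𝕂 L)
    (hbd : ∀ i : ℤ, (k : ℤ) < |i| → g i = ⊥)
    (hint : DirectSum.IsInternal g)
    (hbr : ∀ i j : ℤ, ∀ x ∈ g i, ∀ y ∈ g j, ⁅x, y⁆ ∈ g (i + j)) :
    (∀ A : L, A ∈ g 0 → (∀ B ∈ g 0, ⁅A, B⁆ = 0) →
        A ∈ Submodule.span 𝕂 {x : L | ∃ a ∈ g 0, ∃ b ∈ g 0, ⁅a, b⁆ = x} → A = 0) ∧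
    (∀ A ∈ g 0, ∃ Z C : L, (Z ∈ g 0 ∧ ∀ B ∈ g 0, ⁅Z, B⁆ = 0) ∧
        C ∈ Submodule.span 𝕂 {x : L | ∃ a ∈ g 0, ∃ b ∈ g 0, ⁅a, b⁆ = x} ∧ A = Z + C) ∧
    (∀ Z : L, Z ∈ g 0 → (∀ B ∈ g 0, ⁅Z, B⁆ = 0) →
        ∀ C ∈ Submodule.span 𝕂 {x : L | ∃ a ∈ g 0, ∃ b ∈ g 0, ⁅a, b⁆ = x},
          killingForm 𝕂 L Z C = 0) := by
  classical
  have hFD : FiniteDimensional 𝕂 L := ‹Module.Finite 𝕂 L›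
  set der := Submodule.span 𝕂 {x : L | ∃ a ∈ g 0, ∃ b ∈ g 0, ⁅a, b⁆ = x} with hder
  -- Step A : grading components pair trivially unless degrees sum to zero
  have horth : ∀ i j : ℤ, i + j ≠ 0 → ∀ x ∈ g i, ∀ y ∈ g j, killingForm 𝕂 L x y = 0 := by
    intro i j hij x hx y hy
    rw [killingForm_apply_apply]
    have hσ : ∀ m : ℤ, i + (j + m) ≠ m := fun m => by omega
    refine LinearMap.trace_eq_zero_of_mapsTo_ne hint (fun m => i + (j + m)) hσ
      (fun m z hz => ?_)
    have h1 : ⁅y, z⁆ ∈ g (j + m) := hbr j m y hy z hz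
    have h2 : ⁅x, ⁅y, z⁆⁆ ∈ g (i + (j + m)) := hbr i (j + m) x hx _ h1
    simpa [LieAlgebra.ad_apply] using h2
  -- Step B : the Killing form restricted to `g 0` is nondegenerate
  have hnd0 : ∀ X ∈ g 0, (∀ Y ∈ g 0, killingForm 𝕂 L X Y = 0) → X = 0 := by
    intro X hX h0
    refine hκ.1 X fun Y => ?_
    have hY : Y ∈ ⨆ i, g i := by
      rw [hint.submodule_iSup_eq_top]; trivial
    refine Submodule.iSup_induction g (motive := fun y => killingForm 𝕂 L X y = 0) hY
      (fun i y hy => ?_) (by simp) (fun a b ha hb => ?_)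
    · by_cases hi : i = 0
      · exact h0 y (hi ▸ hy)
      · exact horth 0 i (by omega) X hX y hy
    · show killingForm 𝕂 L X (a + b) = 0
      rw [map_add]
      change killingForm 𝕂 L X a + killingForm 𝕂 L X b = 0
      rw [ha, hb, add_zero]
  -- closure of `g 0` under brackets
  have hH : ∀ x y : L, x ∈ g 0 → y ∈ g 0 → ⁅x, y⁆ ∈ g 0 := fun x y hx hy => by
    have := hbr 0 0 x hx y hy; rwa [add_zero] at this
  -- Step C : center of `g 0` is orthogonal to its derived algebra
  have hZC : ∀ Z : L, Z ∈ g 0 → (∀ B ∈ g 0, ⁅Z, B⁆ = 0) →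
      ∀ C ∈ der, killingForm 𝕂 L Z C = 0 := by
    intro Z hZ hZc C hC
    induction hC using Submodule.span_induction with
    | mem x hx =>
      obtain ⟨a, ha, b, hb, rfl⟩ := hx
      have h1 : killingForm 𝕂 L ⁅Z, a⁆ b = killingForm 𝕂 L Z ⁅a, b⁆ :=
        LieModule.traceForm_apply_lie_apply 𝕂 L L Z a b
      rw [← h1, hZc a ha]; simp
    | zero => simp
    | add x y _ _ hx hy => rw [map_add, hx, hy, add_zero]
    | smul t x _ hx => rw [map_smul, hx, smul_zero]
  -- Step D (part 1) : an element of the center which lies in the derived algebra is zero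
  have part1 : ∀ A : L, A ∈ g 0 → (∀ B ∈ g 0, ⁅A, B⁆ = 0) → A ∈ der → A = 0 := by
    intro A hA hAc hAder
    letI : LieRing (Module.End 𝕂 L) := LieRing.ofAssociativeRing
    set ad : L → Module.End 𝕂 L := fun x => LieAlgebra.ad 𝕂 L x with had
    -- `ad A` commutes with `ad b` for any `b ∈ g 0`
    have hAd0 : ∀ b ∈ g 0, Commute (ad b) (ad A) := by
      intro b hb
      have h1 : ⁅b, A⁆ = 0 := by
        rw [← lie_skew, hAc b hb, neg_zero]
      have h2 : ⁅LieAlgebra.ad 𝕂 L b, LieAlgebra.ad 𝕂 L A⁆ = 0 := by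
        rw [← LieHom.map_lie, h1, map_zero]
      rw [Ring.lie_def, sub_eq_zero] at h2
      exact h2
    -- trace of `ad A * S` vanishes for any `S` commuting with all `ad b`, `b ∈ g 0`
    have hSpan : ∀ S : Module.End 𝕂 L, (∀ b ∈ g 0, Commute (ad b) S) →
        ∀ z ∈ der, LinearMap.trace 𝕂 L (ad z * S) = 0 := by
      intro S hS z hz
      induction hz using Submodule.span_induction with
      | mem x hx =>
        obtain ⟨a, ha, b, hb, rfl⟩ := hx
        have h1 : ad ⁅a, b⁆ = ad a * ad b - ad b * ad a := by
          rw [had]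
          show LieAlgebra.ad 𝕂 L ⁅a, b⁆ = _
          rw [LieHom.map_lie, Ring.lie_def]
        rw [h1, sub_mul, map_sub]
        have h2 : LinearMap.trace 𝕂 L (ad b * ad a * S) =
            LinearMap.trace 𝕂 L (ad a * ad b * S) := by
          rw [mul_assoc, LinearMap.trace_mul_comm, mul_assoc, ← (hS b hb).eq, ← mul_assoc]
        rw [h2, sub_self]
      | zero =>
        have : ad (0 : L) = 0 := by rw [had]; exact (LieAlgebra.ad 𝕂 L).map_zero
        rw [this, zero_mul, map_zero]
      | add x y _ _ hx hy =>
        have : ad (x + y) = ad x + ad y := by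
          rw [had]; exact (LieAlgebra.ad 𝕂 L).map_add x y
        rw [this, add_mul, map_add, hx, hy, add_zero]
      | smul t x _ hx =>
        have : ad (t • x) = t • ad x := by
          rw [had]; exact (LieAlgebra.ad 𝕂 L).map_smul t x
        rw [this, smul_mul_assoc, map_smul, hx, smul_zero]
    -- hence all power traces of `ad A` vanish
    have htr : ∀ n : ℕ, LinearMap.trace 𝕂 L ((ad A) ^ (n + 1)) = 0 := by
      intro n
      have hS : ∀ b ∈ g 0, Commute (ad b) ((ad A) ^ n) := fun b hb => (hAd0 b hb).pow_right n
      have := hSpan ((ad A) ^ n) hS A hAder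
      rwa [← pow_succ'] at this
    -- base change to the algebraic closure
    set K' := AlgebraicClosure 𝕂 with hK'
    haveI : CharZero K' := charZero_of_injective_algebraMap (algebraMap 𝕂 K').injective
    set F : Module.End K' (TensorProduct 𝕂 K' L) := (ad A).baseChange K' with hF
    have hFtr : ∀ n : ℕ, LinearMap.trace K' _ (F ^ (n + 1)) = 0 := by
      intro n
      rw [hF, ← LinearMap.baseChange_pow, LinearMap.trace_baseChange, htr n, map_zero]
    have hFnil : IsNilpotent F := aux_isNilpotent_of_trace_pow F hFtr
    -- conclude that `A` is Killing-orthogonal to `g 0`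
    refine hnd0 A hA fun Y hY => ?_
    have hc : Commute (ad A) (ad Y) := (hAd0 Y hY).symm
    set G : Module.End K' (TensorProduct 𝕂 K' L) := (ad Y).baseChange K' with hG
    have hcFG : Commute G F := by
      rw [Commute, SemiconjBy, hF, hG, ← LinearMap.baseChange_mul, ← LinearMap.baseChange_mul,
        hc.eq]
    have htrFG : LinearMap.trace K' _ (G ∘ₗ F) = 0 := by
      have := LinearMap.trace_comp_eq_mul_of_commute_of_isNilpotent (R := K')
        (M := TensorProduct 𝕂 K' L) (f := G) (g := F) 0 hcFG (by simpa using hFnil)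
      rw [this, zero_mul]
    have hmain : algebraMap 𝕂 K' (killingForm 𝕂 L A Y) = 0 := by
      rw [killingForm_apply_apply, ← Module.End.mul_eq_comp, ← LinearMap.trace_baseChange,
        LinearMap.baseChange_mul]
      rw [← Module.End.mul_eq_comp] at htrFG
      calc LinearMap.trace K' _ ((ad A).baseChange K' * (ad Y).baseChange K')
          = LinearMap.trace K' _ (F * G) := by rw [hF, hG]
        _ = LinearMap.trace K' _ (G * F) := LinearMap.trace_mul_comm K' F G
        _ = 0 := htrFG
    exact (map_eq_zero_iff _ (algebraMap 𝕂 K').injective).mp hmain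
  -- Step E (part 2) : the decomposition, via orthogonal complements inside `g 0`
  let B : LinearMap.BilinForm 𝕂 (g 0) := (killingForm 𝕂 L).restrict (g 0)
  have hBapp : ∀ x y : g 0, B x y = killingForm 𝕂 L (x : L) (y : L) := fun x y => rfl
  have hBrefl : B.IsRefl := by
    intro x y h
    rw [hBapp] at h ⊢
    rwa [LieModule.traceForm_comm]
  let W : Submodule 𝕂 (g 0) := Submodule.comap (g 0).subtype der
  -- every element of the orthogonal complement of `W` is central in `g 0`
  have hcent : ∀ z : g 0, z ∈ B.orthogonal W → ∀ b ∈ g 0, ⁅(z : L), b⁆ = 0 := by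
    intro z hz b hb
    refine hnd0 _ (hH _ _ z.2 hb) fun Y hY => ?_
    have h1 : killingForm 𝕂 L ⁅(z : L), b⁆ Y = killingForm 𝕂 L (z : L) ⁅b, Y⁆ :=
      LieModule.traceForm_apply_lie_apply 𝕂 L L (z : L) b Y
    rw [h1]
    have hbY : ⁅b, Y⁆ ∈ der := Submodule.subset_span ⟨b, hb, Y, hY, rfl⟩
    have h2 := hz ⟨⁅b, Y⁆, hH _ _ hb hY⟩ hbY
    rw [hBapp] at h2
    rw [LieModule.traceForm_comm]
    exact h2
  have hdisj : Disjoint W (B.orthogonal W) := by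
    rw [Submodule.disjoint_def]
    intro x hxW hxO
    exact Subtype.ext (part1 x x.2 (hcent x hxO) hxW)
  have hcompl : IsCompl W (B.orthogonal W) :=
    (LinearMap.BilinForm.isCompl_orthogonal_iff_disjoint hBrefl).mpr hdisj
  refine ⟨part1, ?_, hZC⟩
  intro A hA
  have hmem : (⟨A, hA⟩ : g 0) ∈ W ⊔ B.orthogonal W := by
    rw [hcompl.sup_eq_top]; trivial
  obtain ⟨c, hc, z, hzz, hcz⟩ := Submodule.mem_sup.mp hmem
  refine ⟨(z : L), (c : L), ⟨z.2, hcent z hzz⟩, hc, ?_⟩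
  have hAcz : A = (c : L) + (z : L) := by
    have := congrArg (Subtype.val) hcz
    simpa using this.symm
  rw [hAcz, add_comm]
end

section
/- The restriction of the Killing form κ of g to the center z(g_0) of g_0 is nondegenerate, and the restriction of κ to the derived subalgebra ⁅g_0, g_0⁆ of g_0 is nondegenerate: if Z ∈ z(g_0) satisfies κ(Z, Z') = 0 for all Z' ∈ z(g_0) then Z = 0, and if C ∈ ⁅g_0, g_0⁆ satisfies κ(C, C') = 0 for all C' ∈ ⁅g_0, g_0⁆ then C = 0. -/
section AuxNilpotency
open Module LinearMap

lemma trace_pow_eq_of_isNilpotent_sub {K W : Type*} [Field K] [AddCommGroup W] [Module K W]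
    [FiniteDimensional K W] (g : Module.End K W) (μ : K)
    (hn : IsNilpotent (g - algebraMap K (Module.End K W) μ)) (m : ℕ) :
    trace K W (g ^ m) = μ ^ m * finrank K W := by
  set A := algebraMap K (Module.End K W) μ with hA_def
  set n : Module.End K W := g - A with hn_def
  have hg : g = n + A := (sub_add_cancel g A).symm
  have hcomm : Commute n A := (Algebra.commutes μ n).symm
  have hterm : ∀ k : ℕ, n ^ k * A ^ (m - k) * (m.choose k : Module.End K W)
      = (μ ^ (m - k) * (m.choose k : K)) • n ^ k := by
    intro k
    have h1 : A ^ (m - k) = algebraMap K (Module.End K W) (μ ^ (m - k)) := by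
      rw [hA_def, ← map_pow]
    have h2 : (m.choose k : Module.End K W) = algebraMap K (Module.End K W) (m.choose k : K) := by
      simp
    rw [h1, h2, mul_assoc, ← map_mul, Algebra.algebraMap_eq_smul_one, mul_smul_comm, mul_one]
  rw [hg, hcomm.add_pow]
  rw [map_sum]
  have htr : ∀ k ∈ Finset.range (m + 1),
      trace K W (n ^ k * A ^ (m - k) * (m.choose k : Module.End K W))
      = (μ ^ (m - k) * (m.choose k : K)) * trace K W (n ^ k) := by
    intro k _
    rw [hterm k, map_smul, smul_eq_mul]
  rw [Finset.sum_congr rfl htr, Finset.sum_eq_single 0]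
  · simp
  · intro k hk hk0
    obtain ⟨j, rfl⟩ := Nat.exists_eq_succ_of_ne_zero hk0
    have hnil : IsNilpotent (n ^ (j + 1)) := by
      obtain ⟨N, hN⟩ := hn
      exact ⟨N, by rw [← pow_mul, mul_comm, pow_mul, hN]; simp⟩
    rw [(isNilpotent_trace_of_isNilpotent hnil).eq_zero, mul_zero]
  · intro h; simp at h

lemma isNilpotent_of_trace_pow_eq_zero_aux {K W : Type*} [Field K] [CharZero K] [IsAlgClosed K]
    [AddCommGroup W] [Module K W] [FiniteDimensional K W] (f : Module.End K W)
    (h : ∀ m : ℕ, 1 ≤ m → trace K W (f ^ m) = 0) : IsNilpotent f := by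
  classical
  have hsup : ⨆ μ, f.maxGenEigenspace μ = ⊤ := Module.End.iSup_maxGenEigenspace_eq_top f
  have hds : DirectSum.IsInternal (fun μ : K ↦ f.maxGenEigenspace μ) :=
    DirectSum.isInternal_submodule_of_iSupIndep_of_iSup_eq_top
      f.independent_maxGenEigenspace hsup
  have hN : {μ : K | f.maxGenEigenspace μ ≠ ⊥}.Finite :=
    WellFoundedGT.finite_ne_bot_of_iSupIndep f.independent_maxGenEigenspace
  set s : Finset K := hN.toFinset with hs_def
  have hf1 : ∀ μ : K, Set.MapsTo f (f.maxGenEigenspace μ) (f.maxGenEigenspace μ) :=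
    fun μ ↦ f.mapsTo_maxGenEigenspace_of_comm rfl μ
  -- the key power-sum identities
  have hps : ∀ m : ℕ, 1 ≤ m →
      ∑ μ ∈ s, (finrank K (f.maxGenEigenspace μ) : K) * μ ^ m = 0 := by
    intro m hm
    have hfm : ∀ μ : K, Set.MapsTo (f ^ m) (f.maxGenEigenspace μ) (f.maxGenEigenspace μ) :=
      fun μ ↦ f.mapsTo_maxGenEigenspace_of_comm ((Commute.refl f).pow_right m) μ
    have hsum := LinearMap.trace_eq_sum_trace_restrict' hds hN hfm
    rw [h m hm] at hsum
    have heach : ∀ μ ∈ s, trace K _ ((f ^ m).restrict (hfm μ))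
        = μ ^ m * (finrank K (f.maxGenEigenspace μ) : K) := by
      intro μ _
      have hrw : (f ^ m).restrict (hfm μ) = (f.restrict (hf1 μ)) ^ m := by
        rw [Module.End.pow_restrict m (hf1 μ)]
      rw [hrw]
      refine trace_pow_eq_of_isNilpotent_sub (f.restrict (hf1 μ)) μ ?_ m
      have hnil := f.isNilpotent_restrict_maxGenEigenspace_sub_algebraMap μ
      have hEq : (f - algebraMap K (Module.End K W) μ).restrict
            (Module.End.mapsTo_maxGenEigenspace_of_comm
              (Algebra.mul_sub_algebraMap_commutes f μ) μ)
          = f.restrict (hf1 μ) - algebraMap K (Module.End K (f.maxGenEigenspace μ)) μ := by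
        ext x
        simp [LinearMap.restrict_apply, Algebra.algebraMap_eq_smul_one, LinearMap.sub_apply]
        rfl
      rwa [hEq] at hnil
    rw [Finset.sum_congr rfl heach] at hsum
    rw [show ∑ μ ∈ s, (finrank K (f.maxGenEigenspace μ) : K) * μ ^ m
        = ∑ μ ∈ s, μ ^ m * (finrank K (f.maxGenEigenspace μ) : K) from
      Finset.sum_congr rfl fun μ _ ↦ mul_comm _ _, ← hsum]
  -- all eigenvalues vanish
  have hzero : ∀ μ ∈ s, μ = 0 := by
    intro μ₀ hμ₀
    by_contra hμ₀ne
    set P : Polynomial K := Polynomial.X * ∏ ν ∈ s.erase μ₀, (Polynomial.X - Polynomial.C ν)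
      with hP_def
    have hvanish : ∑ μ ∈ s, (finrank K (f.maxGenEigenspace μ) : K) * P.eval μ = 0 := by
      have hEvalEq : ∀ μ : K, P.eval μ
          = ∑ j ∈ Finset.range (P.natDegree + 1), P.coeff j * μ ^ j := by
        intro μ; exact P.eval_eq_sum_range μ
      have hc0 : P.coeff 0 = 0 := by
        rw [Polynomial.coeff_zero_eq_eval_zero, hP_def]
        simp
      calc ∑ μ ∈ s, (finrank K (f.maxGenEigenspace μ) : K) * P.eval μ
          = ∑ μ ∈ s, ∑ j ∈ Finset.range (P.natDegree + 1),
              P.coeff j * ((finrank K (f.maxGenEigenspace μ) : K) * μ ^ j) := by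
            refine Finset.sum_congr rfl fun μ _ ↦ ?_
            rw [hEvalEq μ, Finset.mul_sum]
            exact Finset.sum_congr rfl fun j _ ↦ by ring
        _ = ∑ j ∈ Finset.range (P.natDegree + 1),
              P.coeff j * ∑ μ ∈ s, (finrank K (f.maxGenEigenspace μ) : K) * μ ^ j := by
            rw [Finset.sum_comm]
            exact Finset.sum_congr rfl fun j _ ↦ by rw [Finset.mul_sum]
        _ = 0 := by
            refine Finset.sum_eq_zero fun j _ ↦ ?_
            rcases Nat.eq_zero_or_pos j with hj | hj
            · rw [hj, hc0, zero_mul]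
            · rw [hps j hj, mul_zero]
    have hsingle : ∑ μ ∈ s, (finrank K (f.maxGenEigenspace μ) : K) * P.eval μ
        = (finrank K (f.maxGenEigenspace μ₀) : K) * P.eval μ₀ := by
      refine Finset.sum_eq_single μ₀ (fun μ hμ hne ↦ ?_) (fun hμ ↦ absurd hμ₀ hμ)
      have : P.eval μ = 0 := by
        rcases eq_or_ne μ 0 with rfl | hμ0
        · simp [hP_def]
        · rw [hP_def]
          simp only [Polynomial.eval_mul, Polynomial.eval_X, Polynomial.eval_prod,
            Polynomial.eval_sub, Polynomial.eval_C]
          refine mul_eq_zero_of_right _ (Finset.prod_eq_zero (Finset.mem_erase.mpr ⟨hne, hμ⟩) ?_)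
          simp
      rw [this, mul_zero]
    have hP0 : P.eval μ₀ ≠ 0 := by
      rw [hP_def]
      simp only [Polynomial.eval_mul, Polynomial.eval_X, Polynomial.eval_prod,
        Polynomial.eval_sub, Polynomial.eval_C]
      refine mul_ne_zero hμ₀ne (Finset.prod_ne_zero_iff.mpr fun ν hν ↦ ?_)
      exact sub_ne_zero.mpr (fun hc ↦ (Finset.mem_erase.mp hν).1 hc.symm)
    have hd0 : (finrank K (f.maxGenEigenspace μ₀) : K) ≠ 0 := by
      have : f.maxGenEigenspace μ₀ ≠ ⊥ := by
        rw [hs_def] at hμ₀; exact (Set.Finite.mem_toFinset hN).mp hμ₀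
      have : 0 < finrank K (f.maxGenEigenspace μ₀) :=
        Module.finrank_pos_iff.mpr (Submodule.nontrivial_iff_ne_bot.mpr this)
      exact_mod_cast this.ne'
    rw [hvanish] at hsingle
    exact hd0 (by
      rcases mul_eq_zero.mp hsingle.symm with h | h
      · exact h
      · exact absurd h hP0)
  -- hence the zero generalized eigenspace is everything
  have htop : f.maxGenEigenspace 0 = ⊤ := by
    rw [← top_le_iff, ← hsup]
    refine iSup_le fun μ ↦ ?_
    rcases eq_or_ne μ 0 with rfl | hμ
    · exact le_rfl
    · have : f.maxGenEigenspace μ = ⊥ := by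
        by_contra hb
        exact hμ (hzero μ ((Set.Finite.mem_toFinset hN).mpr hb))
      rw [this]; exact bot_le
  -- conclude nilpotency
  have h3 : ∀ x : W, ∃ n : ℕ, (f ^ n) x = 0 := by
    intro x
    have hx : x ∈ f.maxGenEigenspace 0 := htop ▸ Submodule.mem_top
    rw [Module.End.mem_maxGenEigenspace] at hx
    obtain ⟨n, hn⟩ := hx
    exact ⟨n, by simpa using hn⟩
  exact ((LinearMap.charpoly_nilpotent_tfae f).out 2 0).mp h3

lemma isNilpotent_of_trace_pow_eq_zero {K W : Type*} [Field K] [CharZero K]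
    [AddCommGroup W] [Module K W] [Module.Finite K W] (f : Module.End K W)
    (h : ∀ m : ℕ, 1 ≤ m → trace K W (f ^ m) = 0) : IsNilpotent f := by
  classical
  let b := Module.finBasis K W
  set M : Matrix _ _ K := LinearMap.toMatrixAlgEquiv b f with hM_def
  set φ := algebraMap K (AlgebraicClosure K) with hφ_def
  set A : Matrix _ _ (AlgebraicClosure K) := M.map φ with hA_def
  have hMm : ∀ m : ℕ, (M ^ m).map φ = A ^ m := by
    intro m
    have := map_pow (φ.mapMatrix) M m
    simpa [RingHom.mapMatrix_apply] using this
  -- endomorphism over the algebraic closure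
  set F := Matrix.toLinAlgEquiv' A with hF_def
  have hFtr : ∀ m : ℕ, 1 ≤ m → trace (AlgebraicClosure K) _ (F ^ m) = 0 := by
    intro m hm
    have h1 : F ^ m = Matrix.toLinAlgEquiv' (A ^ m) := by rw [hF_def, map_pow]
    have h2 : trace (AlgebraicClosure K) _ (Matrix.toLinAlgEquiv' (A ^ m)) = (A ^ m).trace := by
      rw [trace_eq_matrix_trace _ (Pi.basisFun (AlgebraicClosure K) _)]
      congr 1
      rw [LinearMap.toMatrix_eq_toMatrix']
      exact LinearMap.toMatrix'_toLin' (A ^ m)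
    have h3 : (A ^ m).trace = φ ((M ^ m).trace) := by
      rw [← hMm m, Matrix.trace, Matrix.trace, map_sum]
      simp [Matrix.map_apply, Matrix.diag]
    have hMtoM : ∀ g : Module.End K W, LinearMap.toMatrixAlgEquiv b g = LinearMap.toMatrix b b g := by
      intro g; ext i j; rw [LinearMap.toMatrixAlgEquiv_apply, LinearMap.toMatrix_apply]
    have h4 : (M ^ m).trace = trace K W (f ^ m) := by
      rw [hM_def, ← map_pow, trace_eq_matrix_trace K b, hMtoM]
    rw [h1, h2, h3, h4, h m hm, map_zero]
  have hFnil : IsNilpotent F := isNilpotent_of_trace_pow_eq_zero_aux F hFtr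
  have hAnil : IsNilpotent A := by
    obtain ⟨N, hN⟩ := hFnil
    refine ⟨N, ?_⟩
    have h0 : Matrix.toLinAlgEquiv' (A ^ N) = 0 := by rw [← map_pow] at hN; exact hN
    exact (_root_.map_eq_zero_iff (Matrix.toLinAlgEquiv'
      (R := AlgebraicClosure K) (n := Fin (finrank K W)))
      (Matrix.toLinAlgEquiv').injective).mp h0
  have hMnil : IsNilpotent M := by
    obtain ⟨N, hN⟩ := hAnil
    refine ⟨N, ?_⟩
    ext i j
    have : ((M ^ N).map φ) i j = 0 := by rw [hMm N, hN]; simp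
    rw [Matrix.map_apply] at this
    exact (map_eq_zero_iff φ φ.injective).mp this
  obtain ⟨N, hN⟩ := hMnil
  refine ⟨N, ?_⟩
  have : LinearMap.toMatrixAlgEquiv b (f ^ N) = 0 := by rw [map_pow, ← hM_def, hN]
  exact (_root_.map_eq_zero_iff (LinearMap.toMatrixAlgEquiv b)
    (LinearMap.toMatrixAlgEquiv b).injective).mp this
end AuxNilpotency

attribute [local instance 100] LieRing.ofAssociativeRing

/-! CONTEXT: `𝕂` a field of characteristic zero, `L` a finite-dimensional Lie algebra over `𝕂`
with nondegenerate Killing form (i.e. semisimple), equipped with a `|k|`-grading `g`. -/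
/-- The restrictions of the Killing form to the center of `g 0` and to the derived subalgebra
of `g 0` are both nondegenerate. -/
theorem killingForm_restrict_center_derived_nondegenerate
    {𝕂 : Type*} [Field 𝕂] [CharZero 𝕂]
    {L : Type*} [LieRing L] [LieAlgebra 𝕂 L] [Module.Finite 𝕂 L]
    (hκ : (killingForm 𝕂 L).Nondegenerate)
    (k : ℕ) (hk : 1 ≤ k)
    (g : ℤ → Submodule 𝕂 L)
    (hbd : ∀ i : ℤ, (k : ℤ) < |i| → g i = ⊥)
    (hint : DirectSum.IsInternal g)
    (hbr : ∀ i j : ℤ, ∀ x ∈ g i, ∀ y ∈ g j, ⁅x, y⁆ ∈ g (i + j)) :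
    (∀ Z : L, Z ∈ g 0 → (∀ B ∈ g 0, ⁅Z, B⁆ = 0) →
        (∀ Z' : L, Z' ∈ g 0 → (∀ B ∈ g 0, ⁅Z', B⁆ = 0) → killingForm 𝕂 L Z Z' = 0) →
        Z = 0) ∧
    (∀ C ∈ Submodule.span 𝕂 {x : L | ∃ a ∈ g 0, ∃ b ∈ g 0, ⁅a, b⁆ = x},
        (∀ C' ∈ Submodule.span 𝕂 {x : L | ∃ a ∈ g 0, ∃ b ∈ g 0, ⁅a, b⁆ = x},
          killingForm 𝕂 L C C' = 0) → C = 0) := by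
  classical
  set B : LinearMap.BilinForm 𝕂 L := killingForm 𝕂 L with hB_def
  have hsymm : ∀ x y : L, B x y = B y x := fun x y ↦ LieModule.traceForm_comm 𝕂 L L x y
  have hinv : ∀ x y z : L, B ⁅x, y⁆ z = B x ⁅y, z⁆ :=
    fun x y z ↦ LieModule.traceForm_apply_lie_apply 𝕂 L L x y z
  -- (A) graded orthogonality
  have horth : ∀ (i j : ℤ), i + j ≠ 0 → ∀ x ∈ g i, ∀ y ∈ g j, B x y = 0 := by
    intro i j hij x hx y hy
    rw [hB_def, killingForm_apply_apply]
    have hσ : ∀ m : ℤ, i + (j + m) ≠ m := fun m hEq ↦ hij (by omega)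
    refine LinearMap.trace_eq_zero_of_mapsTo_ne hint (fun m ↦ i + (j + m)) hσ ?_
    intro m z hz
    have h1 : ⁅y, z⁆ ∈ g (j + m) := hbr j m y hy z hz
    have h2 : ⁅x, ⁅y, z⁆⁆ ∈ g (i + (j + m)) := hbr i (j + m) x hx _ h1
    simpa using h2
  -- (B) nondegeneracy on `g 0`
  have hnd0 : ∀ x ∈ g 0, (∀ y ∈ g 0, B x y = 0) → x = 0 := by
    intro x hx hxy
    refine hκ.1 x fun y ↦ ?_
    have hy : y ∈ ⨆ j, g j := by rw [hint.submodule_iSup_eq_top]; exact Submodule.mem_top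
    induction hy using Submodule.iSup_induction' with
    | mem j z hz =>
        rcases eq_or_ne j 0 with rfl | hj
        · exact hxy z hz
        · exact horth 0 j (by omega) x hx z hz
    | zero => simp
    | add y z _ _ hy hz => rw [map_add, hy, hz, add_zero]
  -- (C) central elements with nilpotent `ad` vanish
  have hcent_nil : ∀ x ∈ g 0, (∀ b ∈ g 0, ⁅x, b⁆ = 0) →
      IsNilpotent (LieAlgebra.ad 𝕂 L x) → x = 0 := by
    intro x hx hc hnil
    refine hκ.1 x fun y ↦ ?_
    have hy : y ∈ ⨆ j, g j := by rw [hint.submodule_iSup_eq_top]; exact Submodule.mem_top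
    induction hy using Submodule.iSup_induction' with
    | mem j z hz =>
        rcases eq_or_ne j 0 with rfl | hj
        · have hcomm : Commute (LieAlgebra.ad 𝕂 L x) (LieAlgebra.ad 𝕂 L z) := by
            have h0 : ⁅LieAlgebra.ad 𝕂 L x, LieAlgebra.ad 𝕂 L z⁆ = 0 := by
              rw [← LieHom.map_lie, hc z hz, map_zero]
            rw [Ring.lie_def] at h0
            exact sub_eq_zero.mp h0
          have : IsNilpotent (LieAlgebra.ad 𝕂 L x * LieAlgebra.ad 𝕂 L z) :=
            hcomm.isNilpotent_mul_right hnil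
          rw [hB_def, killingForm_apply_apply, ← Module.End.mul_eq_comp]
          exact (LinearMap.isNilpotent_trace_of_isNilpotent this).eq_zero
        · exact horth 0 j (by omega) x hx z hz
    | zero => simp
    | add y z _ _ hy hz => rw [map_add, hy, hz, add_zero]
  set c : Submodule 𝕂 L := Submodule.span 𝕂 {x : L | ∃ a ∈ g 0, ∃ b ∈ g 0, ⁅a, b⁆ = x}
    with hc_def
  have hcle : c ≤ g 0 := by
    rw [hc_def, Submodule.span_le]
    rintro x ⟨a, ha, b, hb, rfl⟩
    simpa using hbr 0 0 a ha b hb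
  -- (N) power traces vanish for central elements of `c`
  have hpowtr : ∀ x, x ∈ c → (∀ b ∈ g 0, ⁅x, b⁆ = 0) →
      ∀ m : ℕ, 1 ≤ m → LinearMap.trace 𝕂 L ((LieAlgebra.ad 𝕂 L x) ^ m) = 0 := by
    intro x hxc hxcent m hm
    obtain ⟨m', rfl⟩ := Nat.exists_eq_succ_of_ne_zero (by omega : m ≠ 0)
    set P : Module.End 𝕂 L := (LieAlgebra.ad 𝕂 L x) ^ m' with hP_def
    have hPcomm : ∀ a ∈ g 0, Commute P (LieAlgebra.ad 𝕂 L a) := by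
      intro a ha
      have h0 : ⁅LieAlgebra.ad 𝕂 L x, LieAlgebra.ad 𝕂 L a⁆ = 0 := by
        rw [← LieHom.map_lie, hxcent a ha, map_zero]
      rw [Ring.lie_def] at h0
      exact (Commute.pow_left (sub_eq_zero.mp h0) m')
    have key : ∀ w ∈ c, LinearMap.trace 𝕂 L (P * LieAlgebra.ad 𝕂 L w) = 0 := by
      intro w hw
      induction hw using Submodule.span_induction with
      | mem w hw =>
          obtain ⟨a, ha, b, hb, rfl⟩ := hw
          have hab : LieAlgebra.ad 𝕂 L ⁅a, b⁆
              = LieAlgebra.ad 𝕂 L a * LieAlgebra.ad 𝕂 L b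
                - LieAlgebra.ad 𝕂 L b * LieAlgebra.ad 𝕂 L a := by
            rw [← Ring.lie_def, LieHom.map_lie]
          rw [hab, mul_sub, map_sub]
          have h1 : LinearMap.trace 𝕂 L (P * (LieAlgebra.ad 𝕂 L b * LieAlgebra.ad 𝕂 L a))
              = LinearMap.trace 𝕂 L (P * (LieAlgebra.ad 𝕂 L a * LieAlgebra.ad 𝕂 L b)) := by
            calc LinearMap.trace 𝕂 L (P * (LieAlgebra.ad 𝕂 L b * LieAlgebra.ad 𝕂 L a))
                = LinearMap.trace 𝕂 L (LieAlgebra.ad 𝕂 L a * (P * LieAlgebra.ad 𝕂 L b)) := by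
                  rw [← mul_assoc, LinearMap.trace_mul_comm]
              _ = LinearMap.trace 𝕂 L ((LieAlgebra.ad 𝕂 L a * P) * LieAlgebra.ad 𝕂 L b) := by
                  rw [mul_assoc]
              _ = LinearMap.trace 𝕂 L (P * (LieAlgebra.ad 𝕂 L a * LieAlgebra.ad 𝕂 L b)) := by
                  rw [← (hPcomm a ha).eq, mul_assoc]
          rw [h1, sub_self]
      | zero => simp
      | add u v _ _ hu hv => rw [map_add, mul_add, map_add, hu, hv, add_zero]
      | smul t u _ hu => rw [map_smul, mul_smul_comm, map_smul, hu, smul_zero]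
    have := key x hxc
    rwa [pow_succ]
  -- elements of `z(g 0) ∩ c` vanish
  have hzc : ∀ x, x ∈ c → (∀ b ∈ g 0, ⁅x, b⁆ = 0) → x = 0 := fun x hxc hxcent ↦
    hcent_nil x (hcle hxc) hxcent
      (isNilpotent_of_trace_pow_eq_zero _ (hpowtr x hxc hxcent))
  have hzero00 : ((0 : ℤ) + 0) = 0 := by norm_num
  constructor
  · -- Part 1
    intro Z hZ0 hZcent hZorth
    -- set up the restricted bilinear form on `g 0`
    set B₀ : LinearMap.BilinForm 𝕂 ↥(g 0) := B.restrict (g 0) with hB₀_def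
    have hB₀apply : ∀ v w : ↥(g 0), B₀ v w = B (v : L) (w : L) := fun v w ↦ rfl
    have hB₀nd : B₀.Nondegenerate := by
      refine (LinearMap.IsRefl.nondegenerate_iff_separatingLeft
        (fun v w h ↦ by rw [hB₀apply] at h ⊢; rw [hsymm]; exact h)).mpr ?_
      intro v hv
      have : (v : L) = 0 := hnd0 v v.2 fun y hy ↦ by
        simpa [hB₀apply] using hv ⟨y, hy⟩
      exact Subtype.ext this
    have hB₀refl : B₀.IsRefl := by
      intro v w h
      rw [hB₀apply] at h ⊢
      rw [hsymm]; exact h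
    let z₀ : Submodule 𝕂 ↥(g 0) :=
      { carrier := {v | ∀ b ∈ g 0, ⁅(v : L), b⁆ = 0}
        add_mem' := by intro u v hu hv b hb; rw [Submodule.coe_add, add_lie, hu b hb, hv b hb,
          add_zero]
        zero_mem' := by intro b hb; simp
        smul_mem' := by intro t v hv b hb; rw [Submodule.coe_smul, smul_lie, hv b hb, smul_zero] }
    let c₀ : Submodule 𝕂 ↥(g 0) := c.comap (g 0).subtype
    have hBvc : ∀ v : ↥(g 0), v ∈ z₀ → ∀ n ∈ c, B (v : L) n = 0 := by
      intro v hv n hn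
      induction hn using Submodule.span_induction with
      | mem w hw =>
          obtain ⟨a, ha, b, hb, rfl⟩ := hw
          rw [← hinv, hv a ha, map_zero, LinearMap.zero_apply]
      | zero => simp
      | add u w _ _ hu hw => rw [map_add, hu, hw, add_zero]
      | smul t u _ hu => rw [map_smul, hu, smul_zero]
    have horthc : B₀.orthogonal c₀ = z₀ := by
      ext v
      rw [LinearMap.BilinForm.mem_orthogonal_iff]
      constructor
      · intro h a ha
        refine hnd0 ⁅(v : L), a⁆ (by simpa using hbr 0 0 (v : L) v.2 a ha) fun b hb ↦ ?_
        have hab : ⁅a, b⁆ ∈ g 0 := by simpa using hbr 0 0 a ha b hb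
        have hgen : ⁅a, b⁆ ∈ c := Submodule.subset_span ⟨a, ha, b, hb, rfl⟩
        have habc : (⟨⁅a, b⁆, hab⟩ : ↥(g 0)) ∈ c₀ := Submodule.mem_comap.mpr (by simpa using hgen)
        have := h _ habc
        rw [hB₀apply] at this
        rw [hinv, hsymm]
        exact this
      · intro hv n hn
        rw [hB₀apply, hsymm]
        exact hBvc v hv (n : L) hn
    have hcc : B₀.orthogonal z₀ = c₀ := by
      rw [← horthc, LinearMap.BilinForm.orthogonal_orthogonal hB₀nd hB₀refl]
    let v : ↥(g 0) := ⟨Z, hZ0⟩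
    have hvz : v ∈ z₀ := hZcent
    have hvorth : v ∈ B₀.orthogonal z₀ := by
      intro w hw
      rw [hB₀apply, hsymm]
      exact hZorth (w : L) w.2 hw
    rw [hcc] at hvorth
    exact hzc Z hvorth hZcent
  · -- Part 2
    intro C hC hC'
    refine hzc C hC ?_
    intro a ha
    refine hnd0 ⁅C, a⁆ (by simpa using hbr 0 0 C (hcle hC) a ha) fun b hb ↦ ?_
    rw [hinv]
    exact hC' ⁅a, b⁆ (Submodule.subset_span ⟨a, ha, b, hb, rfl⟩)
end

section
/- For every A ∈ g_0 and every integer i, the traces of the restrictions of ad(A) to the graded pieces satisfy tr(ad(A)|_{g_{-i}}) = − tr(ad(A)|_{g_i}). -/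
section Aux

variable {𝕂 : Type*} [Field 𝕂] [CharZero 𝕂]
    {L : Type*} [LieRing L] [LieAlgebra 𝕂 L] [Module.Finite 𝕂 L]

/-- Graded pieces of non-opposite degrees are orthogonal for the Killing form. -/
lemma killing_orth_aux (k : ℕ)
    (g : ℤ → Submodule 𝕂 L)
    (hbd : ∀ i : ℤ, (k : ℤ) < |i| → g i = ⊥)
    (hint : DirectSum.IsInternal g)
    (hbr : ∀ i j : ℤ, ∀ x ∈ g i, ∀ y ∈ g j, ⁅x, y⁆ ∈ g (i + j))
    {i j : ℤ} (hij : i + j ≠ 0) {x y : L} (hx : x ∈ g i) (hy : y ∈ g j) :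
    killingForm 𝕂 L x y = 0 := by
  set d : ℤ := i + j with hd
  set φ : L →ₗ[𝕂] L := (LieAlgebra.ad 𝕂 L x) ∘ₗ (LieAlgebra.ad 𝕂 L y) with hφ
  have key : ∀ m : ℤ, ∀ z ∈ g m, (φ ^ (2 * k + 1)) z = 0 := by
    intro m z hz
    by_cases hm : (k : ℤ) < |m|
    · rw [hbd m hm] at hz
      rw [Submodule.mem_bot] at hz
      simp [hz]
    push_neg at hm
    have step : ∀ n : ℕ, (φ ^ n) z ∈ g (m + n * d) := by
      intro n
      induction n with
      | zero => simpa using hz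
      | succ n ih =>
        have h1 : ⁅y, (φ ^ n) z⁆ ∈ g (j + (m + n * d)) :=
          hbr _ _ y hy _ ih
        have h2 : ⁅x, ⁅y, (φ ^ n) z⁆⁆ ∈ g (i + (j + (m + n * d))) :=
          hbr _ _ x hx _ h1
        have heq : (φ ^ (n + 1)) z = ⁅x, ⁅y, (φ ^ n) z⁆⁆ := by
          rw [pow_succ', Module.End.mul_apply, hφ]
          simp [LieAlgebra.ad_apply]
        rw [heq]
        convert h2 using 2
        push_cast
        ring
    have hstep := step (2 * k + 1)
    have hdabs : (1 : ℤ) ≤ |d| := Int.one_le_abs hij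
    have habs : (k : ℤ) < |m + ((2 * k + 1 : ℕ) : ℤ) * d| := by
      have h1 : ((2 * k + 1 : ℕ) : ℤ) ≤ |((2 * k + 1 : ℕ) : ℤ) * d| := by
        rw [abs_mul, abs_of_nonneg (by positivity : (0:ℤ) ≤ ((2 * k + 1 : ℕ) : ℤ))]
        nlinarith [Int.natCast_nonneg (2 * k + 1)]
      have h2 := abs_add_le (-m) (m + ((2 * k + 1 : ℕ) : ℤ) * d)
      rw [neg_add_cancel_left, abs_neg] at h2
      push_cast at h1 h2 ⊢
      linarith
    rw [hbd _ habs] at hstep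
    simpa using hstep
  have hnil : IsNilpotent φ := by
    refine ⟨2 * k + 1, ?_⟩
    ext z
    have hz : z ∈ ⨆ m, g m := by
      rw [hint.submodule_iSup_eq_top]; trivial
    simp only [LinearMap.zero_apply]
    refine Submodule.iSup_induction g (motive := fun w => (φ ^ (2 * k + 1)) w = 0) hz key
      (map_zero _) ?_
    intro a b ha hb
    rw [map_add, ha, hb, add_zero]
  rw [LieModule.traceForm_apply_apply]
  exact IsNilpotent.eq_zero (LinearMap.isNilpotent_trace_of_isNilpotent hnil)

end Aux

/-- For `A ∈ g 0` the trace of `ad A` on `g (-i)` is the negative of its trace on `g i`. -/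
theorem trace_ad_neg_grade
    {𝕂 : Type*} [Field 𝕂] [CharZero 𝕂]
    {L : Type*} [LieRing L] [LieAlgebra 𝕂 L] [Module.Finite 𝕂 L]
    (hκ : (killingForm 𝕂 L).Nondegenerate)
    (k : ℕ) (hk : 1 ≤ k)
    (g : ℤ → Submodule 𝕂 L)
    (hbd : ∀ i : ℤ, (k : ℤ) < |i| → g i = ⊥)
    (hint : DirectSum.IsInternal g)
    (hbr : ∀ i j : ℤ, ∀ x ∈ g i, ∀ y ∈ g j, ⁅x, y⁆ ∈ g (i + j)) :
    ∀ A ∈ g 0, ∀ i : ℤ, ∀ (f : g i →ₗ[𝕂] g i) (f' : g (-i) →ₗ[𝕂] g (-i)),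
      (∀ x : g i, (f x : L) = ⁅A, (x : L)⁆) →
      (∀ x : g (-i), (f' x : L) = ⁅A, (x : L)⁆) →
      LinearMap.trace 𝕂 (g (-i)) f' = - LinearMap.trace 𝕂 (g i) f := by
  have : FiniteDimensional 𝕂 L := inferInstance
  -- the pairing map from `g (-i)` to the dual of `g i`
  set Φ : ∀ i : ℤ, (g (-i)) →ₗ[𝕂] Module.Dual 𝕂 (g i) :=
    fun i => (killingForm 𝕂 L).compl₁₂ (g (-i)).subtype (g i).subtype with hΦ
  -- injectivity of the pairing
  have hinj : ∀ i : ℤ, Function.Injective (Φ i) := by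
    intro i
    rw [← LinearMap.ker_eq_bot, Submodule.eq_bot_iff]
    rintro ⟨y, hy⟩ hker
    rw [LinearMap.mem_ker] at hker
    have hy0 : ∀ x ∈ g i, killingForm 𝕂 L y x = 0 := by
      intro x hx
      have := congrArg (fun ψ => ψ ⟨x, hx⟩) hker
      simpa [hΦ] using this
    have hall : ∀ z : L, killingForm 𝕂 L y z = 0 := by
      intro z
      have hz : z ∈ ⨆ m, g m := by
        rw [hint.submodule_iSup_eq_top]; trivial
      refine Submodule.iSup_induction g (motive := fun w => killingForm 𝕂 L y w = 0) hz ?_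
        (by simp) ?_
      · intro j w hw
        by_cases hji : j = i
        · exact hy0 w (hji ▸ hw)
        · exact killing_orth_aux k g hbd hint hbr (by omega : -i + j ≠ 0) hy hw
      · intro a b ha hb
        rw [map_add, ha, hb, add_zero]
    have : y = 0 := hκ.1 y hall
    simpa using this
  -- dimension comparison
  have hle : ∀ i : ℤ, Module.finrank 𝕂 (g (-i)) ≤ Module.finrank 𝕂 (g i) := by
    intro i
    calc Module.finrank 𝕂 (g (-i)) ≤ Module.finrank 𝕂 (Module.Dual 𝕂 (g i)) :=
          LinearMap.finrank_le_finrank_of_injective (hinj i)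
      _ = Module.finrank 𝕂 (g i) := Subspace.dual_finrank_eq
  have hdim : ∀ i : ℤ, Module.finrank 𝕂 (g (-i)) = Module.finrank 𝕂 (g i) := by
    intro i
    refine le_antisymm (hle i) ?_
    have := hle (-i)
    rwa [neg_neg] at this
  intro A hA i f f' hf hf'
  -- the pairing equivalence
  set e : (g (-i)) ≃ₗ[𝕂] Module.Dual 𝕂 (g i) :=
    (Φ i).linearEquivOfInjective (hinj i) (by rw [hdim i, Subspace.dual_finrank_eq]) with he
  have hconj : e.conj f' = - (Module.Dual.transpose (R := 𝕂) f) := by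
    apply LinearMap.ext
    intro ψ
    obtain ⟨y, rfl⟩ := e.surjective ψ
    rw [LinearEquiv.conj_apply]
    simp only [LinearMap.coe_comp, Function.comp_apply, LinearEquiv.coe_coe,
      LinearEquiv.symm_apply_apply]
    apply LinearMap.ext
    intro x
    have heap : ∀ w : g (-i), (e w : Module.Dual 𝕂 (g i)) = Φ i w := fun w =>
      LinearMap.linearEquivOfInjective_apply _ _ w
    rw [heap, heap]
    have lhs : (Φ i) (f' y) x = killingForm 𝕂 L (f' y : L) (x : L) := rfl
    have rhs : (- (Module.Dual.transpose (R := 𝕂) f)) ((Φ i) y) x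
        = - killingForm 𝕂 L (y : L) ((f x : L)) := rfl
    rw [lhs, rhs, hf' y, hf x]
    exact LieModule.traceForm_apply_lie_apply' 𝕂 L L A (y : L) (x : L)
  calc LinearMap.trace 𝕂 (g (-i)) f'
      = LinearMap.trace 𝕂 (Module.Dual 𝕂 (g i)) (e.conj f') :=
        (LinearMap.trace_conj' f' e).symm
    _ = LinearMap.trace 𝕂 (Module.Dual 𝕂 (g i)) (- (Module.Dual.transpose (R := 𝕂) f)) := by
        rw [hconj]
    _ = - LinearMap.trace 𝕂 (Module.Dual 𝕂 (g i)) (Module.Dual.transpose (R := 𝕂) f) :=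
        map_neg (LinearMap.trace 𝕂 (Module.Dual 𝕂 (g i))) (Module.Dual.transpose (R := 𝕂) f)
    _ = - LinearMap.trace 𝕂 (g i) f := by rw [LinearMap.trace_transpose']
end

section
/- Let E ∈ g_0 be the grading element. Then for every A ∈ g_0, κ(E, A) = 2 · Σ_{i=1}^{k} i · tr(ad(A)|_{g_i}). (This is the Lie-algebra identity underlying the fact that the homomorphism λ(g) = Π_α |det(Ad^α(g))|^{2a_α} defining the canonical bundle of scales has derivative λ'(A) = B(E_λ, A).) -/
/-! CONTEXT: `𝕂` a field of characteristic zero, `L` a finite-dimensional Lie algebra over `𝕂`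
with nondegenerate Killing form (i.e. semisimple), equipped with a `|k|`-grading `g`. -/

lemma trace_dualMap_aux {K V : Type*} [Field K] [AddCommGroup V] [Module K V]
    [FiniteDimensional K V] (S : V →ₗ[K] V) :
    LinearMap.trace K _ S.dualMap = LinearMap.trace K V S := by
  classical
  let b := Module.finBasis K V
  rw [LinearMap.trace_eq_matrix_trace K b.dualBasis, LinearMap.trace_eq_matrix_trace K b,
    ← Matrix.trace_transpose (LinearMap.toMatrix b b S)]
  congr 1
  ext i j
  simp [LinearMap.toMatrix_apply, Matrix.transpose_apply, Module.Basis.dualBasis_repr,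
    Module.Basis.dualBasis_apply]

lemma trace_eq_trace_of_pairing {K V W : Type*} [Field K] [AddCommGroup V] [Module K V]
    [AddCommGroup W] [Module K W] [FiniteDimensional K V] [FiniteDimensional K W]
    (B : V →ₗ[K] W →ₗ[K] K) (hB : Function.Injective B) (hB' : Function.Injective B.flip)
    (S : Module.End K V) (T : Module.End K W)
    (h : ∀ x y, B (S x) y = B x (T y)) :
    LinearMap.trace K W T = LinearMap.trace K V S := by
  have h1 : Module.finrank K V ≤ Module.finrank K W := by
    simpa [Subspace.dual_finrank_eq] using
      LinearMap.finrank_le_finrank_of_injective (f := (B : V →ₗ[K] Module.Dual K W)) hB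
  have h2 : Module.finrank K W ≤ Module.finrank K V := by
    simpa [Subspace.dual_finrank_eq] using
      LinearMap.finrank_le_finrank_of_injective (f := (B.flip : W →ₗ[K] Module.Dual K V)) hB'
  have hfr : Module.finrank K V = Module.finrank K (Module.Dual K W) := by
    rw [Subspace.dual_finrank_eq]; omega
  have hsurj : Function.Surjective (B : V →ₗ[K] Module.Dual K W) :=
    (LinearMap.injective_iff_surjective_of_finrank_eq_finrank hfr).mp hB
  let e : V ≃ₗ[K] Module.Dual K W := LinearEquiv.ofBijective B ⟨hB, hsurj⟩
  have key : e.conj S = T.dualMap := by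
    apply LinearMap.ext
    intro φ
    obtain ⟨x, rfl⟩ := e.surjective φ
    ext y
    simp only [LinearEquiv.conj_apply, LinearMap.comp_apply, LinearEquiv.coe_coe,
      LinearEquiv.symm_apply_apply, LinearMap.dualMap_apply]
    have : e x = B x := rfl
    have hex : e (S x) = B (S x) := rfl
    rw [hex, this, h]
  calc LinearMap.trace K W T = LinearMap.trace K _ T.dualMap := (trace_dualMap_aux T).symm
    _ = LinearMap.trace K _ (e.conj S) := by rw [key]
    _ = LinearMap.trace K V S := LinearMap.trace_conj' S e

/-- For the grading element `E` and any `A ∈ g 0`,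
`κ(E, A) = 2 * ∑_{i = 1}^{k} i * tr(ad A | g i)`. -/
theorem killingForm_grading_element_eq_two_mul_sum_traces
    {𝕂 : Type*} [Field 𝕂] [CharZero 𝕂]
    {L : Type*} [LieRing L] [LieAlgebra 𝕂 L] [Module.Finite 𝕂 L]
    (hκ : (killingForm 𝕂 L).Nondegenerate)
    (k : ℕ) (hk : 1 ≤ k)
    (g : ℤ → Submodule 𝕂 L)
    (hbd : ∀ i : ℤ, (k : ℤ) < |i| → g i = ⊥)
    (hint : DirectSum.IsInternal g)
    (hbr : ∀ i j : ℤ, ∀ x ∈ g i, ∀ y ∈ g j, ⁅x, y⁆ ∈ g (i + j))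
    (E : L) (hE0 : E ∈ g 0)
    (hE : ∀ (i : ℤ) (X : L), X ∈ g i → ⁅E, X⁆ = i • X)
    (A : L) (hA : A ∈ g 0)
    (f : ∀ i : ℤ, g i →ₗ[𝕂] g i)
    (hf : ∀ (i : ℤ) (x : g i), (f i x : L) = ⁅A, (x : L)⁆) :
    killingForm 𝕂 L E A =
      2 * ∑ i ∈ Finset.Icc (1 : ℤ) (k : ℤ), (i : 𝕂) * LinearMap.trace 𝕂 (g i) (f i) := by
  classical
  -- orthogonality of the grading w.r.t. the Killing form
  have horth : ∀ i j : ℤ, i + j ≠ 0 → ∀ x ∈ g i, ∀ y ∈ g j, killingForm 𝕂 L x y = 0 := by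
    intro i j hij x hx y hy
    rw [killingForm_apply_apply]
    refine LinearMap.trace_eq_zero_of_mapsTo_ne hint (fun m => m + (i + j))
      (fun m => by change m + (i + j) ≠ m; omega) ?_
    intro m z hz
    have h1 : ⁅y, z⁆ ∈ g (j + m) := hbr j m y hy z hz
    have h2 : ⁅x, ⁅y, z⁆⁆ ∈ g (i + (j + m)) := hbr _ _ x hx _ h1
    show ((LieAlgebra.ad 𝕂 L) x ∘ₗ (LieAlgebra.ad 𝕂 L) y) z ∈ g (m + (i + j))
    have heq : m + (i + j) = i + (j + m) := by ring
    rw [heq]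
    simpa using h2
  -- nondegeneracy of the pairing g i × g (-i)
  have hnd : ∀ i : ℤ, ∀ x ∈ g i, (∀ y ∈ g (-i), killingForm 𝕂 L x y = 0) → x = 0 := by
    intro i x hx h0
    apply hκ.1
    intro z
    have hz : z ∈ (⊤ : Submodule 𝕂 L) := trivial
    rw [← hint.submodule_iSup_eq_top] at hz
    refine Submodule.iSup_induction (motive := fun z => killingForm 𝕂 L x z = 0) g hz ?_ ?_ ?_
    · intro j y hy
      by_cases hji : j = -i
      · exact h0 y (hji ▸ hy)
      · exact horth i j (by omega) x hx y hy
    · simp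
    · intro a b ha hb; simp [map_add, ha, hb]
  -- skewness: tr (f (-i)) = - tr (f i)
  have hskew : ∀ i : ℤ, LinearMap.trace 𝕂 (g (-i)) (f (-i)) =
      - LinearMap.trace 𝕂 (g i) (f i) := by
    intro i
    set B : g i →ₗ[𝕂] g (-i) →ₗ[𝕂] 𝕂 :=
      (killingForm 𝕂 L).compl₁₂ (g i).subtype (g (-i)).subtype with hB
    have hBapp : ∀ (x : g i) (y : g (-i)), B x y = killingForm 𝕂 L x y := fun _ _ => rfl
    have hBinj : Function.Injective B := by
      rw [injective_iff_map_eq_zero]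
      intro x hx0
      have : ∀ y ∈ g (-i), killingForm 𝕂 L (x : L) y = 0 := by
        intro y hy
        have := congrArg (fun φ => φ ⟨y, hy⟩) hx0
        simpa [hBapp] using this
      exact_mod_cast Subtype.ext (hnd i (x : L) x.2 this)
    have hBinj' : Function.Injective B.flip := by
      rw [injective_iff_map_eq_zero]
      intro y hy0
      have : ∀ x ∈ g (-(-i)), killingForm 𝕂 L (y : L) x = 0 := by
        intro x hx
        have hx' : x ∈ g i := by simpa using hx
        have := congrArg (fun φ => φ ⟨x, hx'⟩) hy0
        have h2 : killingForm 𝕂 L x (y : L) = 0 := by simpa [hBapp] using this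
        rwa [LieModule.traceForm_comm] at h2
      exact_mod_cast Subtype.ext (hnd (-i) (y : L) y.2 this)
    have hrel : ∀ (x : g i) (y : g (-i)), B (f i x) y = B x ((-(f (-i))) y) := by
      intro x y
      have e2 : killingForm 𝕂 L ⁅(x : L), A⁆ (y : L) =
          killingForm 𝕂 L (x : L) ⁅A, (y : L)⁆ :=
        LieModule.traceForm_apply_lie_apply 𝕂 L L x A y
      have e3 : (⁅(x : L), A⁆ : L) = -⁅A, (x : L)⁆ := by rw [← lie_skew]
      have e4 : killingForm 𝕂 L ⁅A, (x : L)⁆ (y : L) =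
          - killingForm 𝕂 L (x : L) ⁅A, (y : L)⁆ := by
        rw [← e2, e3, map_neg, LinearMap.neg_apply, neg_neg]
      have h4 : (((-(f (-i))) y : g (-i)) : L) = -⁅A, (y : L)⁆ := by
        simp [hf]
      rw [hBapp, hBapp, hf, h4, map_neg, e4]
    have := trace_eq_trace_of_pairing B hBinj hBinj' (f i) (-(f (-i))) hrel
    rw [map_neg] at this
    linear_combination -this
  -- the composite ad E ∘ ad A preserves each g i
  set T : Module.End 𝕂 L := (LieAlgebra.ad 𝕂 L E) ∘ₗ (LieAlgebra.ad 𝕂 L A) with hT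
  have hmapA : ∀ i : ℤ, ∀ z ∈ g i, ⁅A, z⁆ ∈ g i := by
    intro i z hz
    simpa using hbr 0 i A hA z hz
  have hmap : ∀ i : ℤ, Set.MapsTo T (g i) (g i) := by
    intro i z hz
    have h1 : ⁅A, z⁆ ∈ g i := hmapA i z hz
    have h2 : T z = (i : ℤ) • ⁅A, z⁆ := by
      simp only [hT, LinearMap.comp_apply, LieAlgebra.ad_apply]
      exact hE i _ h1
    have : T z ∈ g i := by
      rw [h2, ← Int.cast_smul_eq_zsmul 𝕂]
      exact Submodule.smul_mem _ _ h1
    exact this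
  -- restriction of T to g i is (i : 𝕂) • f i
  have hres : ∀ i : ℤ, T.restrict (hmap i) = (i : 𝕂) • f i := by
    intro i
    ext x
    have h1 : ⁅A, (x : L)⁆ ∈ g i := hmapA i _ x.2
    show T (x : L) = ((i : 𝕂) • f i x : g i)
    simp only [hT, LinearMap.comp_apply, LieAlgebra.ad_apply]
    rw [hE i _ h1]
    show (i : ℤ) • ⁅A, (x : L)⁆ = ((i : 𝕂) • (f i x) : L)
    rw [hf, ← Int.cast_smul_eq_zsmul 𝕂]
  have hfin : {i : ℤ | g i ≠ ⊥}.Finite := by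
    apply Set.Finite.subset (Set.finite_Icc (-(k : ℤ)) (k : ℤ))
    intro i hi
    by_contra hmem
    simp only [Set.mem_Icc, not_and_or, not_le] at hmem
    exact hi (hbd i (by rcases abs_cases i with h | h <;> omega))
  have htr : killingForm 𝕂 L E A =
      ∑ i ∈ hfin.toFinset, (i : 𝕂) * LinearMap.trace 𝕂 (g i) (f i) := by
    rw [killingForm_apply_apply, ← hT,
      LinearMap.trace_eq_sum_trace_restrict' hint hfin hmap]
    refine Finset.sum_congr rfl fun i _ => ?_
    rw [hres i, map_smul, smul_eq_mul]
  -- extend the sum to Icc (-k) k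
  have hsub : hfin.toFinset ⊆ Finset.Icc (-(k : ℤ)) (k : ℤ) := by
    intro i hi
    rw [Set.Finite.mem_toFinset] at hi
    rw [Finset.mem_Icc]
    by_contra hmem
    simp only [not_and_or, not_le] at hmem
    exact hi (hbd i (by rcases abs_cases i with h | h <;> omega))
  have htr2 : killingForm 𝕂 L E A =
      ∑ i ∈ Finset.Icc (-(k : ℤ)) (k : ℤ), (i : 𝕂) * LinearMap.trace 𝕂 (g i) (f i) := by
    rw [htr]
    refine Finset.sum_subset hsub fun i _ hi => ?_
    rw [Set.Finite.mem_toFinset, Set.mem_setOf_eq, not_not] at hi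
    have : Subsingleton (g i) := by rw [hi]; infer_instance
    have : f i = 0 := Subsingleton.elim _ _
    rw [this, map_zero, mul_zero]
  rw [htr2]
  -- split the sum
  have hunion : Finset.Icc (-(k : ℤ)) (k : ℤ) =
      Finset.Icc (-(k : ℤ)) (-1) ∪ Finset.Icc (0 : ℤ) (k : ℤ) := by
    ext i; simp only [Finset.mem_Icc, Finset.mem_union]; omega
  have hdisj : Disjoint (Finset.Icc (-(k : ℤ)) (-1)) (Finset.Icc (0 : ℤ) (k : ℤ)) := by
    rw [Finset.disjoint_left]
    intro i hi hi'
    simp only [Finset.mem_Icc] at hi hi'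
    omega
  have hins : Finset.Icc (0 : ℤ) (k : ℤ) = insert (0 : ℤ) (Finset.Icc (1 : ℤ) (k : ℤ)) := by
    ext i; simp only [Finset.mem_Icc, Finset.mem_insert]; omega
  rw [hunion, Finset.sum_union hdisj, hins, Finset.sum_insert (by simp)]
  have hneg : ∑ i ∈ Finset.Icc (-(k : ℤ)) (-1), (i : 𝕂) * LinearMap.trace 𝕂 (g i) (f i) =
      ∑ i ∈ Finset.Icc (1 : ℤ) (k : ℤ), (i : 𝕂) * LinearMap.trace 𝕂 (g i) (f i) := by
    refine Finset.sum_nbij' (fun i => -i) (fun i => -i) ?_ ?_ ?_ ?_ ?_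
    · intro a ha; simp only [Finset.mem_Icc] at *; omega
    · intro a ha; simp only [Finset.mem_Icc] at *; omega
    · intro a _; ring
    · intro a _; ring
    · intro a _
      rw [hskew a]
      push_cast
      ring
  rw [hneg]
  push_cast
  ring
end

section
/- Assume that g_- is generated by g_{-1}, i.e. the Lie subalgebra of g generated by g_{-1} contains g_i for every i < 0. Then for every integer j ≥ 1 and every Z ∈ g_j, if ⁅Y, Z⁆ = 0 for all Y ∈ g_{-1}, then Z = 0. -/
/-! CONTEXT: `𝕂` a field of characteristic zero, `L` a finite-dimensional Lie algebra over `𝕂`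
with nondegenerate Killing form (i.e. semisimple), equipped with a `|k|`-grading `g`. -/
/-- If `g₋` is generated by `g (-1)`, then for `j ≥ 1` an element `Z ∈ g j` killed by all
brackets with `g (-1)` is zero. -/
theorem eq_zero_of_bracket_g_neg_one_eq_zero
    {𝕂 : Type*} [Field 𝕂] [CharZero 𝕂]
    {L : Type*} [LieRing L] [LieAlgebra 𝕂 L] [Module.Finite 𝕂 L]
    (hκ : (killingForm 𝕂 L).Nondegenerate)
    (k : ℕ) (hk : 1 ≤ k)
    (g : ℤ → Submodule 𝕂 L)
    (hbd : ∀ i : ℤ, (k : ℤ) < |i| → g i = ⊥)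
    (hint : DirectSum.IsInternal g)
    (hbr : ∀ i j : ℤ, ∀ x ∈ g i, ∀ y ∈ g j, ⁅x, y⁆ ∈ g (i + j))
    (hgen : ∀ i : ℤ, i < 0 → ∀ x ∈ g i, x ∈ LieSubalgebra.lieSpan 𝕂 L (g (-1) : Set L)) :
    ∀ j : ℤ, 1 ≤ j → ∀ Z ∈ g j, (∀ Y ∈ g (-1), ⁅Y, Z⁆ = 0) → Z = 0 := by
  intro j hj Z hZ hbrZ
  -- Step A: everything in the Lie span of `g (-1)` centralizes `Z`.
  have hcent : ∀ x ∈ LieSubalgebra.lieSpan 𝕂 L (g (-1) : Set L), ⁅x, Z⁆ = 0 := by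
    intro x hx
    let K : LieSubalgebra 𝕂 L :=
      { carrier := {y | ⁅y, Z⁆ = 0}
        add_mem' := fun {a b} ha hb => by
          simp only [Set.mem_setOf_eq] at *
          rw [add_lie, ha, hb, add_zero]
        zero_mem' := by simp
        smul_mem' := fun c a ha => by
          simp only [Set.mem_setOf_eq] at *
          rw [smul_lie, ha, smul_zero]
        lie_mem' := fun {a b} ha hb => by
          simp only [Set.mem_setOf_eq] at *
          rw [lie_lie, ha, hb, lie_zero, lie_zero, sub_zero] }
    have hle : LieSubalgebra.lieSpan 𝕂 L (g (-1) : Set L) ≤ K :=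
      LieSubalgebra.lieSpan_le.mpr (fun y hy => hbrZ y hy)
    exact hle hx
  -- Step B: degree-shifting elements are ad-nilpotent.
  have key : ∀ (m : ℤ), m ≠ 0 → ∀ x : L, (∀ i : ℤ, ∀ v ∈ g i, ⁅x, v⁆ ∈ g (i + m)) →
      IsNilpotent (LieAlgebra.ad 𝕂 L x) := by
    intro m hm x hx
    refine ⟨2 * k + 1, ?_⟩
    have hmap : ∀ (n : ℕ) (i : ℤ), ∀ v ∈ g i,
        ((LieAlgebra.ad 𝕂 L x) ^ n) v ∈ g (i + n * m) := by
      intro n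
      induction n with
      | zero => intro i v hv; simpa using hv
      | succ n ih =>
        intro i v hv
        have h1 := hx _ _ (ih i v hv)
        have h2 : i + (n : ℤ) * m + m = i + ((n : ℕ) + 1 : ℕ) * m := by push_cast; ring
        rw [h2] at h1
        rw [pow_succ', Module.End.mul_apply]
        exact h1
    apply LinearMap.ext
    intro v
    have hv : v ∈ (⊤ : Submodule 𝕂 L) := trivial
    rw [← hint.submodule_iSup_eq_top] at hv
    rw [LinearMap.zero_apply]
    refine Submodule.iSup_induction g (motive := fun w => ((LieAlgebra.ad 𝕂 L x) ^ (2 * k + 1)) w = 0)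
      hv ?_ (by simp) ?_
    · intro i w hw
      by_cases hik : |i| ≤ (k : ℤ)
      · have hmem := hmap (2 * k + 1) i w hw
        have hzero : g (i + ((2 * k + 1 : ℕ) : ℤ) * m) = ⊥ := by
          apply hbd
          have h1 : (1 : ℤ) ≤ |m| := by
            rcases lt_or_gt_of_ne hm with h | h
            · rw [abs_of_neg h]; omega
            · rw [abs_of_pos h]; omega
          have h2 : |((2 * k + 1 : ℕ) : ℤ) * m| = ((2 * k + 1 : ℕ) : ℤ) * |m| := by
            rw [abs_mul, abs_of_nonneg (by positivity)]
          have h3 : |((2 * k + 1 : ℕ) : ℤ) * m| ≤ |i + ((2 * k + 1 : ℕ) : ℤ) * m| + |i| := by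
            calc |((2 * k + 1 : ℕ) : ℤ) * m|
                = |(i + ((2 * k + 1 : ℕ) : ℤ) * m) + (-i)| := by ring_nf
              _ ≤ |i + ((2 * k + 1 : ℕ) : ℤ) * m| + |(-i)| := abs_add_le _ _
              _ = |i + ((2 * k + 1 : ℕ) : ℤ) * m| + |i| := by rw [abs_neg]
          have h4 : ((2 * k + 1 : ℕ) : ℤ) * |m| ≥ ((2 * k + 1 : ℕ) : ℤ) := by nlinarith
          push_cast at h2 h3 h4 ⊢
          linarith
        rw [hzero] at hmem
        simpa using hmem
      · have : g i = ⊥ := hbd i (by omega)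
        rw [this] at hw
        simp only [Submodule.mem_bot] at hw
        rw [hw, map_zero]
    · intro a b ha hb
      rw [map_add, ha, hb, add_zero]
  -- ad Z is nilpotent.
  have hZmaps : ∀ i : ℤ, ∀ v ∈ g i, ⁅Z, v⁆ ∈ g (i + j) := by
    intro i v hv
    have := hbr j i Z hZ v hv
    rwa [add_comm] at this
  have hnilZ := key j (by omega) Z hZmaps
  -- Step C: killing form pairing with each graded piece vanishes.
  have hcomp : ∀ i : ℤ, ∀ x ∈ g i, killingForm 𝕂 L x Z = 0 := by
    intro i x hx
    rcases eq_or_ne (i + j) 0 with hij | hij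
    · -- i = -j, use nilpotency of the commuting product
      have hxZ : ⁅x, Z⁆ = 0 := hcent x (hgen i (by omega) x hx)
      have hxmaps : ∀ i' : ℤ, ∀ v ∈ g i', ⁅x, v⁆ ∈ g (i' + i) := by
        intro i' v hv
        have := hbr i i' x hx v hv
        rwa [add_comm] at this
      have hnilx := key i (by omega) x hxmaps
      have hcomm : Commute (LieAlgebra.ad 𝕂 L x) (LieAlgebra.ad 𝕂 L Z) := by
        letI : LieRing (Module.End 𝕂 L) := LieRing.ofAssociativeRing
        have h2 := (LieAlgebra.ad 𝕂 L).map_lie x Z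
        rw [hxZ, map_zero, Ring.lie_def] at h2
        exact (sub_eq_zero.mp h2.symm)
      have hnilprod : IsNilpotent (LieAlgebra.ad 𝕂 L x * LieAlgebra.ad 𝕂 L Z) :=
        hcomm.isNilpotent_mul_right hnilx
      rw [killingForm_apply_apply, ← Module.End.mul_eq_comp]
      exact (LinearMap.isNilpotent_trace_of_isNilpotent hnilprod).eq_zero
    · -- degree-shifting operator has zero trace
      rw [killingForm_apply_apply]
      refine LinearMap.trace_eq_zero_of_mapsTo_ne hint (fun m => m + (i + j))
        (fun m hcon => hij (by have h : m + (i + j) = m := hcon; omega)) ?_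
      intro m v hv
      have h1 := hZmaps m v hv
      have h2 := hbr i (m + j) x hx _ h1
      have h3 : i + (m + j) = m + (i + j) := by ring
      rw [h3] at h2
      simpa [LieAlgebra.ad_apply] using h2
  -- Combine: `Z` is in the radical of the Killing form.
  have hall : ∀ x : L, killingForm 𝕂 L x Z = 0 := by
    intro x
    have hx : x ∈ (⊤ : Submodule 𝕂 L) := trivial
    rw [← hint.submodule_iSup_eq_top] at hx
    refine Submodule.iSup_induction g (motive := fun w => killingForm 𝕂 L w Z = 0) hx
      (fun i v hv => hcomp i v hv) (by simp) ?_
    intro a b ha hb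
    rw [map_add, LinearMap.add_apply, ha, hb, add_zero]
  exact hκ.1 Z (fun n => (LieModule.traceForm_comm 𝕂 L L Z n).trans (hall n))
end

section
/- Assume that g_- is generated by g_{-1} (the Lie subalgebra of g generated by g_{-1} contains g_i for every i < 0) and that no nonzero Lie ideal of g is contained in g_0. Then g_0 acts faithfully on g_{-1}: if A ∈ g_0 satisfies ⁅A, X⁆ = 0 for all X ∈ g_{-1}, then A = 0. -/
/-! CONTEXT: `𝕂` a field of characteristic zero, `L` a finite-dimensional Lie algebra over `𝕂`
with nondegenerate Killing form (i.e. semisimple), equipped with a `|k|`-grading `g`. -/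
/-- Under the effectivity assumptions, `g 0` acts faithfully on `g (-1)`. -/
theorem g0_acts_faithfully_on_g_neg_one
    {𝕂 : Type*} [Field 𝕂] [CharZero 𝕂]
    {L : Type*} [LieRing L] [LieAlgebra 𝕂 L] [Module.Finite 𝕂 L]
    (hκ : (killingForm 𝕂 L).Nondegenerate)
    (k : ℕ) (hk : 1 ≤ k)
    (g : ℤ → Submodule 𝕂 L)
    (hbd : ∀ i : ℤ, (k : ℤ) < |i| → g i = ⊥)
    (hint : DirectSum.IsInternal g)
    (hbr : ∀ i j : ℤ, ∀ x ∈ g i, ∀ y ∈ g j, ⁅x, y⁆ ∈ g (i + j))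
    (hgen : ∀ i : ℤ, i < 0 → ∀ x ∈ g i, x ∈ LieSubalgebra.lieSpan 𝕂 L (g (-1) : Set L))
    (heff : ∀ I : LieIdeal 𝕂 L, (∀ x ∈ I, x ∈ g 0) → I = ⊥) :
    ∀ A ∈ g 0, (∀ X ∈ g (-1), ⁅A, X⁆ = 0) → A = 0 := by
  intro A hA hAX
  have htop : (⨆ i, g i) = ⊤ := hint.submodule_iSup_eq_top
  -- Step 1 : A kills g i for i < 0
  have step1 : ∀ i : ℤ, i < 0 → ∀ x ∈ g i, ⁅A, x⁆ = 0 := by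
    let C : LieSubalgebra 𝕂 L :=
      { toSubmodule := LinearMap.ker ((LieAlgebra.ad 𝕂 L) A)
        lie_mem' := by
          intro x y hx hy
          simp only [SetLike.mem_coe, Submodule.mem_carrier, LinearMap.mem_ker,
            LieAlgebra.ad_apply] at hx hy ⊢
          rw [leibniz_lie, hx, hy, zero_lie, lie_zero, add_zero] }
    have hC : ∀ x, x ∈ C ↔ ⁅A, x⁆ = 0 := by
      intro x
      simp [C, LieSubalgebra.mem_mk_iff, LinearMap.mem_ker, LieAlgebra.ad_apply]
    have hspan : LieSubalgebra.lieSpan 𝕂 L (g (-1) : Set L) ≤ C :=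
      (LieSubalgebra.lieSpan_le).mpr (fun x hx => (hC x).mpr (hAX x hx))
    intro i hi x hx
    exact (hC x).mp (hspan (hgen i hi x hx))
  -- Step 2 : A kills g j for all j ≠ 0
  have step2 : ∀ j : ℤ, j ≠ 0 → ∀ x ∈ g j, ⁅A, x⁆ = 0 := by
    intro j hj x hx
    rcases lt_or_gt_of_ne hj with hneg | hpos
    · exact step1 j hneg x hx
    -- j > 0 : use the Killing form
    have hu : ⁅A, x⁆ ∈ g j := by
      have := hbr 0 j A hA x hx
      rwa [zero_add] at this
    apply hκ.1
    intro y
    have hy : y ∈ (⨆ i, g i) := htop ▸ Submodule.mem_top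
    induction hy using Submodule.iSup_induction' with
    | mem m z hz =>
      rcases eq_or_ne m (-j) with rfl | hm
      · -- complementary degree : use invariance
        rw [show (killingForm 𝕂 L) ⁅A, x⁆ z
            = - (killingForm 𝕂 L) x ⁅A, z⁆ from
          LieModule.traceForm_apply_lie_apply' 𝕂 L L A x z]
        rw [step1 (-j) (by omega) z hz, map_zero, neg_zero]
      · -- off-diagonal degrees : trace of a shifting operator
        rw [LieModule.traceForm_apply_apply]
        refine LinearMap.trace_eq_zero_of_mapsTo_ne hint (fun l => l + (j + m))
          (fun l => by show l + (j + m) ≠ l; omega) (fun l w hw => ?_)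
        have h1 : ⁅z, w⁆ ∈ g (m + l) := hbr m l z hz w hw
        have h2 : ⁅⁅A, x⁆, ⁅z, w⁆⁆ ∈ g (j + (m + l)) := hbr j (m + l) _ hu _ h1
        have hidx : j + (m + l) = l + (j + m) := by ring
        rw [hidx] at h2
        simpa [LieModule.toEnd_apply_apply] using h2
    | zero => simp
    | add u v _ _ hu' hv' => rw [map_add, hu', hv', add_zero]
  -- Step 3 : the ideal of elements of g 0 killing everything of nonzero degree
  let I : LieIdeal 𝕂 L :=
    { carrier := {x | x ∈ g 0 ∧ ∀ j : ℤ, j ≠ 0 → ∀ y ∈ g j, ⁅x, y⁆ = 0}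
      add_mem' := by
        rintro a b ⟨ha0, ha⟩ ⟨hb0, hb⟩
        refine ⟨(g 0).add_mem ha0 hb0, fun j hj y hy => ?_⟩
        rw [add_lie, ha j hj y hy, hb j hj y hy, add_zero]
      zero_mem' := ⟨(g 0).zero_mem, fun j _ y _ => zero_lie y⟩
      smul_mem' := by
        rintro c a ⟨ha0, ha⟩
        refine ⟨(g 0).smul_mem c ha0, fun j hj y hy => ?_⟩
        rw [smul_lie, ha j hj y hy, smul_zero]
      lie_mem := by
        rintro x m ⟨hm0, hm⟩
        have hx : x ∈ (⨆ i, g i) := htop ▸ Submodule.mem_top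
        induction hx using Submodule.iSup_induction' with
        | mem i z hz =>
          rcases eq_or_ne i 0 with rfl | hi
          · constructor
            · have := hbr 0 0 z hz m hm0; rwa [zero_add] at this
            · intro j hj y hy
              have hzy : ⁅z, y⁆ ∈ g j := by
                have := hbr 0 j z hz y hy; rwa [zero_add] at this
              rw [lie_lie, hm j hj y hy, lie_zero, hm j hj _ hzy, zero_sub, neg_zero]
          · have : ⁅z, m⁆ = 0 := by
              rw [← lie_skew, hm i hi z hz, neg_zero]
            rw [this]
            exact ⟨(g 0).zero_mem, fun j _ y _ => zero_lie y⟩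
        | zero => rw [zero_lie]; exact ⟨(g 0).zero_mem, fun j _ y _ => zero_lie y⟩
        | add u v _ _ hu' hv' =>
          rw [add_lie]
          exact ⟨(g 0).add_mem hu'.1 hv'.1,
            fun j hj y hy => by rw [add_lie, hu'.2 j hj y hy, hv'.2 j hj y hy, add_zero]⟩ }
  have hI : I = ⊥ := heff I (fun x hx => hx.1)
  have hAI : A ∈ I := ⟨hA, step2⟩
  rw [hI] at hAI
  simpa using hAI
end
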